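/- Let [A] be an interval matrix with midpoint Ac = I (the identity matrix) and radius Δ = (1/2)(Ā−A̲). Then [A] is strongly principally nondegenerate if and only if ρ(Δ) < 1. -/

import Mathlib

open Matrix

/-- Spectral radius of a real square matrix (via its complex spectrum). -/
noncomputable def specRad {n : ℕ} (A : Matrix (Fin n) (Fin n) ℝ) : ℝ :=
  (spectralRadius ℂ (A.map (algebraMap ℝ ℂ))).toReal

/-- `A` is an M-matrix: `A = s•I - N` with `N ≥ 0` and `s > ρ(N)`. -/
def IsMMatrix {n : ℕ} (A : Matrix (Fin n) (Fin n) ℝ) : Prop :=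
  ∃ (s : ℝ) (N : Matrix (Fin n) (Fin n) ℝ),
    (∀ i j, 0 ≤ N i j) ∧ A = s • (1 : Matrix (Fin n) (Fin n) ℝ) - N ∧ specRad N < s

/-- `A` is an M0-matrix: `A = s•I - N` with `N ≥ 0` and `s ≥ ρ(N)`. -/
def IsM0Matrix {n : ℕ} (A : Matrix (Fin n) (Fin n) ℝ) : Prop :=
  ∃ (s : ℝ) (N : Matrix (Fin n) (Fin n) ℝ),
    (∀ i j, 0 ≤ N i j) ∧ A = s • (1 : Matrix (Fin n) (Fin n) ℝ) - N ∧ specRad N ≤ s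

/-- Comparison matrix. -/
def compMatrix {n : ℕ} (A : Matrix (Fin n) (Fin n) ℝ) : Matrix (Fin n) (Fin n) ℝ :=
  fun i j => if i = j then |A i i| else -|A i j|

def IsHMatrix {n : ℕ} (A : Matrix (Fin n) (Fin n) ℝ) : Prop :=
  IsMMatrix (compMatrix A)

def IsSMatrix {n : ℕ} (A : Matrix (Fin n) (Fin n) ℝ) : Prop :=
  ∃ x : Fin n → ℝ, (∀ i, 0 < x i) ∧ (∀ i, 0 < A.mulVec x i)

def Copositive {n : ℕ} (A : Matrix (Fin n) (Fin n) ℝ) : Prop :=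
  ∀ x : Fin n → ℝ, (∀ i, 0 ≤ x i) → 0 ≤ x ⬝ᵥ A.mulVec x

def StrictlyCopositive {n : ℕ} (A : Matrix (Fin n) (Fin n) ℝ) : Prop :=
  ∀ x : Fin n → ℝ, (∀ i, 0 ≤ x i) → x ≠ 0 → 0 < x ⬝ᵥ A.mulVec x

def Semimonotone {n : ℕ} (A : Matrix (Fin n) (Fin n) ℝ) : Prop :=
  ∀ I : Finset (Fin n), I.Nonempty →
    ¬ ∃ x : ↥I → ℝ,
      (∀ i, (A.submatrix ((↑) : ↥I → Fin n) ((↑) : ↥I → Fin n)).mulVec x i < 0) ∧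
      (∀ i, 0 ≤ x i)

def PrincipallyNondegenerate {n : ℕ} (A : Matrix (Fin n) (Fin n) ℝ) : Prop :=
  ∀ I : Finset (Fin n), I.Nonempty →
    (A.submatrix ((↑) : ↥I → Fin n) ((↑) : ↥I → Fin n)).det ≠ 0

/-- A nonnegative matrix is irreducible if `(I + A)^(n-1) > 0` entrywise. -/
def IrreducibleMat {n : ℕ} (A : Matrix (Fin n) (Fin n) ℝ) : Prop :=
  ∀ i j, 0 < ((1 + A) ^ (n - 1)) i j

/-- The block matrix `[[A_II, -A_IJ], [-A_JI, A_JJ]]`. -/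
def csBlock {n : ℕ} (A : Matrix (Fin n) (Fin n) ℝ) (I J : Finset (Fin n)) :
    Matrix (↥I ⊕ ↥J) (↥I ⊕ ↥J) ℝ :=
  Matrix.fromBlocks
    (A.submatrix ((↑) : ↥I → Fin n) ((↑) : ↥I → Fin n))
    (-(A.submatrix ((↑) : ↥I → Fin n) ((↑) : ↥J → Fin n)))
    (-(A.submatrix ((↑) : ↥J → Fin n) ((↑) : ↥I → Fin n)))
    (A.submatrix ((↑) : ↥J → Fin n) ((↑) : ↥J → Fin n))

def ColumnSufficient {n : ℕ} (A : Matrix (Fin n) (Fin n) ℝ) : Prop :=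
  ∀ I J : Finset (Fin n), Disjoint I J → (I ∪ J).Nonempty →
    ¬ ∃ x : (↥I ⊕ ↥J) → ℝ,
      (∀ k, (csBlock A I J).mulVec x k ≤ 0) ∧
      (csBlock A I J).mulVec x ≠ 0 ∧
      (∀ k, 0 < x k)

def IsR0Matrix {n : ℕ} (A : Matrix (Fin n) (Fin n) ℝ) : Prop :=
  ∀ I : Finset (Fin n), I.Nonempty →
    ¬ ∃ x : ↥I → ℝ,
      (∀ i, (A.submatrix ((↑) : ↥I → Fin n) ((↑) : ↥I → Fin n)).mulVec x i = 0) ∧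
      (∀ j : ↥(Iᶜ : Finset (Fin n)),
        0 ≤ (A.submatrix ((↑) : ↥(Iᶜ : Finset (Fin n)) → Fin n) ((↑) : ↥I → Fin n)).mulVec x j) ∧
      (∀ i, 0 < x i)

def IsRMatrix {n : ℕ} (A : Matrix (Fin n) (Fin n) ℝ) : Prop :=
  ∀ I : Finset (Fin n), I.Nonempty →
    ¬ ∃ (x : ↥I → ℝ) (t : ℝ),
      (∀ i, (A.submatrix ((↑) : ↥I → Fin n) ((↑) : ↥I → Fin n)).mulVec x i + t = 0) ∧
      (∀ j : ↥(Iᶜ : Finset (Fin n)),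
        0 ≤ (A.submatrix ((↑) : ↥(Iᶜ : Finset (Fin n)) → Fin n) ((↑) : ↥I → Fin n)).mulVec x j + t) ∧
      (∀ i, 0 < x i) ∧ 0 ≤ t

def PosDefMat {n : ℕ} (A : Matrix (Fin n) (Fin n) ℝ) : Prop :=
  ∀ x : Fin n → ℝ, x ≠ 0 → 0 < x ⬝ᵥ A.mulVec x

def PosSemidefMat {n : ℕ} (A : Matrix (Fin n) (Fin n) ℝ) : Prop :=
  ∀ x : Fin n → ℝ, 0 ≤ x ⬝ᵥ A.mulVec x

/-- Membership of `A` in the interval matrix `[Al, Au]`. -/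
def memInterval {n : ℕ} (Al Au A : Matrix (Fin n) (Fin n) ℝ) : Prop :=
  ∀ i j, Al i j ≤ A i j ∧ A i j ≤ Au i j

/-- The mixed block matrix `[[Al_II, -Au_IJ], [-Au_JI, Al_JJ]]`. -/
def csMixedBlock {n : ℕ} (Al Au : Matrix (Fin n) (Fin n) ℝ) (I J : Finset (Fin n)) :
    Matrix (↥I ⊕ ↥J) (↥I ⊕ ↥J) ℝ :=
  Matrix.fromBlocks
    (Al.submatrix ((↑) : ↥I → Fin n) ((↑) : ↥I → Fin n))
    (-(Au.submatrix ((↑) : ↥I → Fin n) ((↑) : ↥J → Fin n)))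
    (-(Au.submatrix ((↑) : ↥J → Fin n) ((↑) : ↥I → Fin n)))
    (Al.submatrix ((↑) : ↥J → Fin n) ((↑) : ↥J → Fin n))

open Matrix Filter Topology
open scoped ENNReal NNReal

attribute [local instance] Matrix.linftyOpNormedAddCommGroup Matrix.linftyOpNormedRing
  Matrix.linftyOpNormedAlgebra


namespace StrReg

noncomputable local instance matComplete (n : ℕ) :
    CompleteSpace (Matrix (Fin n) (Fin n) ℂ) :=
  by infer_instance

lemma entry_le_norm {n : ℕ} (M : Matrix (Fin n) (Fin n) ℂ) (i j : Fin n) :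
    ‖M i j‖ ≤ ‖M‖ := by
  have h1 : ‖M i j‖₊ ≤ ∑ k, ‖M i k‖₊ :=
    Finset.single_le_sum (f := fun k => ‖M i k‖₊) (fun k _ => zero_le) (Finset.mem_univ j)
  have h2 : (∑ k, ‖M i k‖₊) ≤ Finset.univ.sup fun i : Fin n => ∑ k, ‖M i k‖₊ :=
    Finset.le_sup (f := fun i : Fin n => ∑ k, ‖M i k‖₊) (Finset.mem_univ i)
  have := h1.trans h2
  rw [← Matrix.linfty_opNNNorm_def] at this
  exact this

lemma pow_tendsto_zero {n : ℕ} (Δ : Matrix (Fin n) (Fin n) ℝ) (hn : n ≠ 0)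
    (hρ : specRad Δ < 1) (i j : Fin n) :
    Tendsto (fun k : ℕ => (Δ ^ k) i j) atTop (𝓝 0) := by
  haveI : NeZero n := ⟨hn⟩
  set M : Matrix (Fin n) (Fin n) ℂ := Δ.map (algebraMap ℝ ℂ) with hM
  have hne : spectralRadius ℂ M ≠ ⊤ :=
    ((spectrum.spectralRadius_le_nnnorm (𝕜 := ℂ) M).trans_lt ENNReal.coe_lt_top).ne
  have hlt : spectralRadius ℂ M < 1 := by
    rw [← ENNReal.toReal_lt_toReal hne ENNReal.one_ne_top]
    simpa [specRad, hM] using hρ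
  obtain ⟨r, hr1, hr2⟩ := exists_between hlt
  have hrne : r ≠ ⊤ := (hr2.trans ENNReal.one_lt_top).ne
  have hT := spectrum.pow_nnnorm_pow_one_div_tendsto_nhds_spectralRadius M
  have hev : ∀ᶠ k : ℕ in atTop, (‖M ^ k‖₊ : ℝ≥0∞) ^ (1 / (k : ℝ)) < r :=
    hT.eventually_lt_const hr1
  have hev2 : ∀ᶠ k : ℕ in atTop, ‖M ^ k‖ ≤ r.toReal ^ k := by
    filter_upwards [hev, eventually_ge_atTop 1] with k hk hk1
    have hk0 : (k : ℝ) ≠ 0 := Nat.cast_ne_zero.mpr (by omega)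
    have : ((‖M ^ k‖₊ : ℝ≥0∞) ^ (1 / (k : ℝ))) ^ (k : ℝ) ≤ r ^ (k : ℝ) :=
      ENNReal.rpow_le_rpow hk.le (Nat.cast_nonneg k)
    rw [← ENNReal.rpow_mul, one_div, inv_mul_cancel₀ hk0, ENNReal.rpow_one] at this
    rw [ENNReal.rpow_natCast] at this
    have h2 : (‖M ^ k‖₊ : ℝ≥0∞).toReal ≤ (r ^ k).toReal :=
      ENNReal.toReal_mono (ENNReal.pow_ne_top hrne) this
    rw [ENNReal.toReal_pow] at h2
    simpa using h2
  have hmap : ∀ k : ℕ, M ^ k = (Δ ^ k).map (algebraMap ℝ ℂ) := by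
    intro k
    induction k with
    | zero =>
      simp only [pow_zero]
      exact (Matrix.map_one _ (map_zero _) (map_one _)).symm
    | succ m ih =>
      rw [pow_succ, pow_succ, Matrix.map_mul, ih]
  have hbd : ∀ k : ℕ, |(Δ ^ k) i j| ≤ ‖M ^ k‖ := by
    intro k
    rw [hmap k]
    have h := entry_le_norm ((Δ ^ k).map (algebraMap ℝ ℂ)) i j
    rw [Matrix.map_apply, norm_algebraMap', Real.norm_eq_abs] at h
    exact h
  have hr2' : r.toReal < 1 := by
    rw [← ENNReal.toReal_one]
    exact ENNReal.toReal_strict_mono ENNReal.one_ne_top hr2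
  have hg : Tendsto (fun k : ℕ => r.toReal ^ k) atTop (𝓝 0) :=
    tendsto_pow_atTop_nhds_zero_of_lt_one ENNReal.toReal_nonneg hr2'
  have habs : Tendsto (fun k : ℕ => |(Δ ^ k) i j|) atTop (𝓝 0) := by
    apply squeeze_zero' (Eventually.of_forall fun k => abs_nonneg _) _ hg
    filter_upwards [hev2] with k hk
    exact (hbd k).trans hk
  exact (tendsto_zero_iff_abs_tendsto_zero _).mpr habs

lemma mulVec_mono {n : ℕ} {N : Matrix (Fin n) (Fin n) ℝ} (hN : ∀ i j, 0 ≤ N i j)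
    {u w : Fin n → ℝ} (h : ∀ i, u i ≤ w i) (i : Fin n) : N.mulVec u i ≤ N.mulVec w i := by
  simp only [Matrix.mulVec, dotProduct]
  exact Finset.sum_le_sum fun j _ => mul_le_mul_of_nonneg_left (h j) (hN i j)

lemma pow_entry_nonneg {n : ℕ} {N : Matrix (Fin n) (Fin n) ℝ} (hN : ∀ i j, 0 ≤ N i j) :
    ∀ k : ℕ, ∀ i j, 0 ≤ (N ^ k) i j := by
  intro k
  induction k with
  | zero => intro i j; simp [Matrix.one_apply]; split <;> norm_num
  | succ m ih =>
    intro i j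
    rw [pow_succ, Matrix.mul_apply]
    exact Finset.sum_nonneg fun l _ => mul_nonneg (ih i l) (hN l j)

lemma vanish {n : ℕ} (Δ : Matrix (Fin n) (Fin n) ℝ) (hΔ : ∀ i j, 0 ≤ Δ i j)
    (hρ : specRad Δ < 1) (y : Fin n → ℝ) (hy : ∀ i, 0 ≤ y i)
    (hle : ∀ i, y i ≤ Δ.mulVec y i) : y = 0 := by
  rcases Nat.eq_zero_or_pos n with hn | hn
  · subst hn; exact funext fun i => i.elim0
  have key : ∀ k : ℕ, ∀ i, y i ≤ (Δ ^ k).mulVec y i := by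
    intro k
    induction k with
    | zero => intro i; simp [Matrix.one_mulVec]
    | succ m ih =>
      intro i
      have h1 : (Δ ^ m).mulVec y i ≤ (Δ ^ m).mulVec (Δ.mulVec y) i :=
        mulVec_mono (pow_entry_nonneg hΔ m) hle i
      have h2 : (Δ ^ (m+1)).mulVec y = (Δ ^ m).mulVec (Δ.mulVec y) := by
        rw [pow_succ, ← Matrix.mulVec_mulVec]
      rw [h2]
      exact (ih i).trans h1
  funext i
  have hzero : Tendsto (fun k : ℕ => (Δ ^ k).mulVec y i) atTop (𝓝 0) := by
    have : ∀ k : ℕ, (Δ ^ k).mulVec y i = ∑ j, (Δ ^ k) i j * y j := fun k => rfl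
    simp only [this]
    have := tendsto_finset_sum (Finset.univ : Finset (Fin n))
      (fun j _ => (pow_tendsto_zero Δ hn.ne' hρ i j).mul_const (y j))
    simpa using this
  have h1 : y i ≤ 0 := ge_of_tendsto' hzero fun k => key k i
  exact le_antisymm h1 (hy i)


lemma exists_eigvec {n : ℕ} (M : Matrix (Fin n) (Fin n) ℂ) {μ : ℂ} (hμ : μ ∈ spectrum ℂ M) :
    ∃ v : Fin n → ℂ, v ≠ 0 ∧ M.mulVec v = μ • v := by
  rw [spectrum.mem_iff, Matrix.isUnit_iff_isUnit_det, isUnit_iff_ne_zero, not_not] at hμ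
  obtain ⟨v, hv, hMv⟩ := (Matrix.exists_mulVec_eq_zero_iff).mpr hμ
  refine ⟨v, hv, ?_⟩
  rw [Matrix.sub_mulVec, Algebra.algebraMap_eq_smul_one, Matrix.smul_mulVec,
    Matrix.one_mulVec, sub_eq_zero] at hMv
  exact hMv.symm

end StrReg


open StrReg Filter Topology in
theorem stmt_9 {n : ℕ} (Al Au : Matrix (Fin n) (Fin n) ℝ)
    (hle : ∀ i j, Al i j ≤ Au i j)
    (Ac : Matrix (Fin n) (Fin n) ℝ) (hAc : Ac = (1/2 : ℝ) • (Al + Au)) (Δ : Matrix (Fin n) (Fin n) ℝ) (hΔ : Δ = (1/2 : ℝ) • (Au - Al))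
    (hI : Ac = (1 : Matrix (Fin n) (Fin n) ℝ)) :
    (∀ A : Matrix (Fin n) (Fin n) ℝ, memInterval Al Au A → PrincipallyNondegenerate A) ↔ specRad Δ < 1 := by
  have hΔnn : ∀ i j, 0 ≤ Δ i j := by
    intro i j
    rw [hΔ]
    simp only [Matrix.smul_apply, Matrix.sub_apply, smul_eq_mul]
    linarith [hle i j]
  have hAl : Al = 1 - Δ := by
    rw [← hI, hAc, hΔ]
    ext i j
    simp only [Matrix.smul_apply, Matrix.sub_apply, Matrix.add_apply, smul_eq_mul]
    ring
  have hAu : Au = 1 + Δ := by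
    rw [← hI, hAc, hΔ]
    ext i j
    simp only [Matrix.smul_apply, Matrix.sub_apply, Matrix.add_apply, smul_eq_mul]
    ring
  constructor
  · -- strong nondegeneracy implies ρ(Δ) < 1
    intro H
    by_contra hge
    push_neg at hge
    rcases Nat.eq_zero_or_pos n with hn | hn
    · subst hn
      haveI : Subsingleton (Matrix (Fin 0) (Fin 0) ℂ) := ⟨fun a b => by ext i; exact i.elim0⟩
      have h0 : specRad Δ = 0 := by
        unfold specRad
        rw [spectrum.SpectralRadius.of_subsingleton]
        simp
      rw [h0] at hge; linarith
    haveI : NeZero n := ⟨hn.ne'⟩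
    set M : Matrix (Fin n) (Fin n) ℂ := Δ.map (algebraMap ℝ ℂ) with hM
    obtain ⟨μ, hμmem, hμ⟩ := spectrum.exists_nnnorm_eq_spectralRadius M
    have hμ1 : (1 : ℝ) ≤ ‖μ‖ := by
      have : specRad Δ = ‖μ‖ := by
        unfold specRad
        rw [← hμ]
        simp
      linarith [hge, this]
    obtain ⟨v, hv0, hvec⟩ := exists_eigvec M hμmem
    set x : Fin n → ℝ := fun i => ‖v i‖ with hx
    have hxnn : ∀ i, 0 ≤ x i := fun i => norm_nonneg _
    have hx0 : ∃ i, x i ≠ 0 := by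
      obtain ⟨i, hi⟩ := Function.ne_iff.mp hv0
      exact ⟨i, by simpa [hx] using hi⟩
    have hxle : ∀ i, x i ≤ Δ.mulVec x i := by
      intro i
      have h1 : x i ≤ ‖μ‖ * x i := le_mul_of_one_le_left (hxnn i) hμ1
      have h2 : ‖μ‖ * x i = ‖M.mulVec v i‖ := by
        rw [hvec]
        simp [hx, norm_smul]
      have h3 : ‖M.mulVec v i‖ ≤ Δ.mulVec x i := by
        rw [Matrix.mulVec, dotProduct]
        refine (norm_sum_le _ _).trans ?_
        rw [Matrix.mulVec, dotProduct]
        refine Finset.sum_le_sum fun j _ => ?_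
        rw [norm_mul, hM, Matrix.map_apply, norm_algebraMap', Real.norm_eq_abs,
          abs_of_nonneg (hΔnn i j)]
      linarith
    -- build the singular matrix
    set t : Fin n → ℝ := fun i => if Δ.mulVec x i = 0 then 0 else x i / Δ.mulVec x i with ht
    have hΔxnn : ∀ i, 0 ≤ Δ.mulVec x i := by
      intro i
      rw [Matrix.mulVec, dotProduct]
      exact Finset.sum_nonneg fun j _ => mul_nonneg (hΔnn i j) (hxnn j)
    have ht0 : ∀ i, 0 ≤ t i := by
      intro i
      rw [ht]
      dsimp only
      split
      · exact le_refl 0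
      · exact div_nonneg (hxnn i) (hΔxnn i)
    have ht1 : ∀ i, t i ≤ 1 := by
      intro i
      rw [ht]
      dsimp only
      split
      · norm_num
      · rename_i h
        exact div_le_one_of_le₀ (hxle i) (hΔxnn i)
    set B : Matrix (Fin n) (Fin n) ℝ := Matrix.of fun i j => t i * Δ i j with hB
    have hBx : B.mulVec x = x := by
      funext i
      rw [Matrix.mulVec, dotProduct]
      have : ∑ j, B i j * x j = t i * (Δ.mulVec x i) := by
        rw [Matrix.mulVec, dotProduct, Finset.mul_sum]
        exact Finset.sum_congr rfl fun j _ => by rw [hB]; dsimp; ring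
      rw [this, ht]
      dsimp only
      split
      · rename_i h
        have hxi : x i = 0 := le_antisymm (h ▸ hxle i) (hxnn i)
        simp [hxi]
      · rename_i h
        exact div_mul_cancel₀ (x i) h
    set A : Matrix (Fin n) (Fin n) ℝ := 1 - B with hA
    have hmem : memInterval Al Au A := by
      intro i j
      have hBnn : 0 ≤ B i j := by rw [hB]; exact mul_nonneg (ht0 i) (hΔnn i j)
      have hBle : B i j ≤ Δ i j := by
        rw [hB]
        dsimp
        calc t i * Δ i j ≤ 1 * Δ i j := mul_le_mul_of_nonneg_right (ht1 i) (hΔnn i j)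
        _ = Δ i j := one_mul _
      constructor
      · rw [hAl, hA]
        simp only [Matrix.sub_apply]
        linarith
      · rw [hAu, hA]
        simp only [Matrix.sub_apply, Matrix.add_apply]
        linarith
    have hAx : A.mulVec x = 0 := by
      rw [hA, Matrix.sub_mulVec, Matrix.one_mulVec, hBx, sub_self]
    have hdet : A.det = 0 := by
      rw [← Matrix.exists_mulVec_eq_zero_iff]
      obtain ⟨i, hi⟩ := hx0
      exact ⟨x, fun h => hi (congrFun h i), hAx⟩
    have huniv : (Finset.univ : Finset (Fin n)).Nonempty := Finset.univ_nonempty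
    have := H A hmem Finset.univ huniv
    apply this
    let e : ↥(Finset.univ : Finset (Fin n)) ≃ Fin n :=
      ⟨fun a => a.1, fun i => ⟨i, Finset.mem_univ i⟩, fun a => rfl, fun i => rfl⟩
    have : A.submatrix ((↑) : ↥(Finset.univ : Finset (Fin n)) → Fin n) ((↑) : _ → Fin n)
        = A.submatrix e e := rfl
    rw [this, Matrix.det_submatrix_equiv_self, hdet]
  · -- ρ(Δ) < 1 implies strong nondegeneracy
    intro hρ A hA I hIne
    intro hdet
    obtain ⟨v, hv0, hv⟩ := (Matrix.exists_mulVec_eq_zero_iff).mpr hdet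
    set y : Fin n → ℝ := fun i => if h : i ∈ I then ‖v ⟨i, h⟩‖ else 0 with hy
    have hynn : ∀ i, 0 ≤ y i := by
      intro i
      rw [hy]
      dsimp only
      split
      · exact norm_nonneg _
      · exact le_refl 0
    have habsA : ∀ i j, |(1 : Matrix (Fin n) (Fin n) ℝ) i j - A i j| ≤ Δ i j := by
      intro i j
      have h1 := (hA i j).1
      have h2 := (hA i j).2
      rw [hAl] at h1; rw [hAu] at h2
      simp only [Matrix.sub_apply, Matrix.add_apply] at h1 h2
      rw [abs_le]
      constructor <;> linarith
    have hE : (1 - A.submatrix ((↑) : ↥I → Fin n) ((↑) : ↥I → Fin n)).mulVec v = v := by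
      rw [Matrix.sub_mulVec, Matrix.one_mulVec, hv, sub_zero]
    have hyle : ∀ i, y i ≤ Δ.mulVec y i := by
      intro i
      by_cases hi : i ∈ I
      · have hvi : v ⟨i, hi⟩ =
            ∑ j : ↥I, (1 - A.submatrix ((↑) : ↥I → Fin n) ((↑) : ↥I → Fin n)) ⟨i, hi⟩ j * v j :=
          (congrFun hE ⟨i, hi⟩).symm
        have h1 : y i ≤ ∑ j : ↥I, Δ i (j : Fin n) * y (j : Fin n) := by
          have : y i = ‖v ⟨i, hi⟩‖ := by rw [hy]; dsimp only; rw [dif_pos hi]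
          rw [this, hvi, Real.norm_eq_abs]
          refine (Finset.abs_sum_le_sum_abs _ _).trans ?_
          refine Finset.sum_le_sum fun j _ => ?_
          rw [abs_mul]
          have hEb : |(1 - A.submatrix ((↑) : ↥I → Fin n) ((↑) : ↥I → Fin n)) ⟨i, hi⟩ j|
              ≤ Δ i (j : Fin n) := by
            have h1eq : (1 : Matrix (↥I) (↥I) ℝ) ⟨i, hi⟩ j
                = (1 : Matrix (Fin n) (Fin n) ℝ) i (j : Fin n) := by
              rw [Matrix.one_apply, Matrix.one_apply]
              by_cases hij : (⟨i, hi⟩ : ↥I) = j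
              · rw [if_pos hij, if_pos (by rw [← hij])]
              · rw [if_neg hij, if_neg (fun h => hij (Subtype.ext h))]
            rw [Matrix.sub_apply, h1eq, Matrix.submatrix_apply]
            exact habsA i (j : Fin n)
          have hyj : ‖v j‖ = y (j : Fin n) := by
            rw [hy]; dsimp only; rw [dif_pos j.2]
          rw [← Real.norm_eq_abs (v j), hyj]
          exact mul_le_mul_of_nonneg_right hEb (hynn _)
        have h2 : ∑ j : ↥I, Δ i (j : Fin n) * y (j : Fin n)
            = ∑ j ∈ I, Δ i j * y j := Finset.sum_coe_sort I (fun j => Δ i j * y j)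
        have h3 : ∑ j ∈ I, Δ i j * y j ≤ ∑ j, Δ i j * y j :=
          Finset.sum_le_sum_of_subset_of_nonneg (Finset.subset_univ I)
            (fun j _ _ => mul_nonneg (hΔnn i j) (hynn j))
        rw [Matrix.mulVec, dotProduct]
        calc y i ≤ _ := h1
        _ = _ := h2
        _ ≤ _ := h3
      · have : y i = 0 := by rw [hy]; dsimp only; rw [dif_neg hi]
        rw [this]
        rw [Matrix.mulVec, dotProduct]
        exact Finset.sum_nonneg fun j _ => mul_nonneg (hΔnn i j) (hynn j)
    have hy0 : y = 0 := vanish Δ hΔnn hρ y hynn hyle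
    apply hv0
    funext a
    have : y (a : Fin n) = 0 := congrFun hy0 _
    rw [hy] at this
    dsimp only at this
    rw [dif_pos a.2] at this
    have : v ⟨(a : Fin n), a.2⟩ = 0 := norm_eq_zero.mp this
    simpa using this
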